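/- arXiv:2604.09281 — 3 statements merged into one kernel-verified Lean document; each statement's English description precedes it below -/
import Mathlib

section
/- Let d ≥ 1 be an integer, α ∈ (0,1), m > max(0,(d-2)/d), and b := α/(2+d(m-1)) > 0. Define Q : (0,1) → ℝ by Q(η) = (1/Γ(1-α)) ∫_η^1 (1-σ^{1/b})^{-α} σ^{1-d} dσ. Then Q(η)/(1-η)^{1-α} tends to b^α/Γ(2-α) as η → 1⁻. -/
/-!
Near `σ = 1` we have `1 - σ ^ (1/b) ~ (1 - σ) / b`, so the integrand of `Q` is asymptotic to
`b ^ α (1 - σ) ^ (-α)`, whose integral over `(η, 1)` is `b ^ α (1 - η) ^ (1 - α) / (1 - α)`.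
Since both the primitive and `(1 - η) ^ (1 - α)` vanish at `1`, L'Hôpital's rule turns this
into the limit of the ratio of derivatives, and `Γ(2 - α) = (1 - α) Γ(1 - α)` gives the
constant.
-/

open MeasureTheory Set Filter Topology Asymptotics

lemma integrableAtFilter_one_sub_rpow_nhdsLT {α : ℝ} (hα : α < 1) :
    IntegrableAtFilter (fun x : ℝ => (1 - x) ^ (-α)) (𝓝[<] 1) := by
  have h : IntervalIntegrable (fun x : ℝ => (1 - x) ^ (-α)) volume 0 1 := by
    simpa using ((intervalIntegral.intervalIntegrable_rpow' (a := 0) (b := 1)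
      (by linarith : -1 < -α)).comp_sub_left 1).symm
  exact ⟨Ioo 0 1, Ioo_mem_nhdsLT zero_lt_one, h.1.mono_set Ioo_subset_Ioc_self⟩

lemma hasDerivAt_one_sub_rpow (x : ℝ) {s : ℝ} (hx : x < 1) :
    HasDerivAt (fun y : ℝ => (1 - y) ^ s) (-(s * (1 - x) ^ (s - 1))) x :=
  (((hasDerivAt_id' x).const_sub 1).rpow_const (Or.inl (sub_pos.2 hx).ne')).congr_deriv
    (by ring)

lemma tendsto_one_sub_rpow_nhdsLT {s : ℝ} (hs : 0 < s) :
    Tendsto (fun y : ℝ => (1 - y) ^ s) (𝓝[<] 1) (𝓝 0) := by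
  have h : ContinuousAt (fun y : ℝ => (1 - y) ^ s) 1 :=
    (continuousAt_const.sub continuousAt_id).rpow_const (Or.inr hs.le)
  simpa [Real.zero_rpow hs.ne'] using h.tendsto.mono_left nhdsWithin_le_nhds

lemma tendsto_one_sub_rpow_div_one_sub (p : ℝ) :
    Tendsto (fun x : ℝ => (1 - x ^ p) / (1 - x)) (𝓝[≠] 1) (𝓝 p) := by
  have h := hasDerivAt_iff_tendsto_slope.1 <| by
    simpa using Real.hasDerivAt_rpow_const (x := 1) (p := p) (Or.inl one_ne_zero)
  refine h.congr fun x => ?_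
  rw [slope_def_field, Real.one_rpow, ← neg_sub 1 (x ^ p), ← neg_sub 1 x, neg_div_neg_eq]

section AsymptoticsAtOne

variable {g : ℝ → ℝ} {α L : ℝ}

lemma integrableAtFilter_nhdsLT_of_tendsto_div_rpow (hα : α < 1)
    (hg : ∀ᶠ x in 𝓝[<] 1, ContinuousAt g x)
    (hlim : Tendsto (fun x => g x / (1 - x) ^ (-α)) (𝓝[<] 1) (𝓝 L)) :
    IntegrableAtFilter g (𝓝[<] 1) := by
  have hO : g =O[𝓝[<] 1] fun x => (1 - x) ^ (-α) := by
    refine isBigO_of_div_tendsto_nhds ?_ L hlim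
    filter_upwards [self_mem_nhdsWithin] with x (hx : x < 1) h
    exact absurd h (Real.rpow_pos_of_pos (sub_pos.2 hx) _).ne'
  obtain ⟨c, hc, hcont⟩ := mem_nhdsLT_iff_exists_Ioo_subset.1 hg
  have hmeas : StronglyMeasurableAtFilter g (𝓝[<] 1) :=
    ⟨Ioo c 1, Ioo_mem_nhdsLT hc,
      (continuousOn_of_forall_continuousAt hcont).aestronglyMeasurable measurableSet_Ioo⟩
  exact hO.integrableAtFilter hmeas (integrableAtFilter_one_sub_rpow_nhdsLT hα)

lemma tendsto_intervalIntegral_nhdsLT_of_integrableOn {c : ℝ} (hc : c < 1)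
    (hint : IntegrableOn g (Ioo c 1)) :
    Tendsto (fun x => ∫ σ in x..1, g σ) (𝓝[<] 1) (𝓝 0) := by
  rw [← integrableOn_Icc_iff_integrableOn_Ioo, ← uIcc_of_le hc.le] at hint
  have h := intervalIntegral.continuousOn_primitive_interval_left hint 1 right_mem_uIcc
  rw [uIcc_of_le hc.le] at h
  simpa only [intervalIntegral.integral_same] using h.tendsto.mono_left <| by
    rw [← nhdsWithin_Ioo_eq_nhdsLT hc]; exact nhdsWithin_mono _ Ioo_subset_Icc_self

theorem tendsto_setIntegral_Ioo_div_rpow (hα : α < 1)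
    (hg : ∀ᶠ x in 𝓝[<] 1, ContinuousAt g x)
    (hlim : Tendsto (fun x => g x / (1 - x) ^ (-α)) (𝓝[<] 1) (𝓝 L)) :
    Tendsto (fun x => (∫ σ in Ioo x 1, g σ) / (1 - x) ^ (1 - α)) (𝓝[<] 1)
      (𝓝 (L / (1 - α))) := by
  obtain ⟨s, hs, hint⟩ := integrableAtFilter_nhdsLT_of_tendsto_div_rpow hα hg hlim
  obtain ⟨c, hc, hsub⟩ := mem_nhdsLT_iff_exists_Ioo_subset.1 (inter_mem hs hg)
  have hIoo : Ioo c 1 ∈ 𝓝[<] (1 : ℝ) := Ioo_mem_nhdsLT hc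
  have hderiv : ∀ x ∈ Ioo c 1, HasDerivAt (fun u => ∫ σ in u..1, g σ) (-g x) x := by
    intro x hx
    have hintx : IntegrableOn g (Ioo x 1) :=
      hint.mono_set fun y hy => (hsub ⟨hx.1.trans hy.1, hy.2⟩).1
    exact intervalIntegral.integral_hasDerivAt_left
      ((intervalIntegrable_iff_integrableOn_Ioo_of_le hx.2.le).2 hintx)
      (ContinuousOn.stronglyMeasurableAtFilter isOpen_Ioo
        (continuousOn_of_forall_continuousAt fun y hy => (hsub hy).2) x hx) (hsub hx).2
  have hderiv_ne : ∀ᶠ x in 𝓝[<] (1 : ℝ), -((1 - α) * (1 - x) ^ (1 - α - 1)) ≠ 0 :=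
    eventually_of_mem self_mem_nhdsWithin fun x (hx : x < 1) =>
      neg_ne_zero.2 (mul_pos (sub_pos.2 hα) (Real.rpow_pos_of_pos (sub_pos.2 hx) _)).ne'
  have hdiv : Tendsto (fun x => -g x / -((1 - α) * (1 - x) ^ (1 - α - 1))) (𝓝[<] 1)
      (𝓝 (L / (1 - α))) := by
    refine (hlim.div_const (1 - α)).congr fun x => ?_
    rw [neg_div_neg_eq, sub_sub_cancel_left, mul_comm, ← div_div]
  refine (HasDerivAt.lhopital_zero_nhdsLT (eventually_of_mem hIoo hderiv)
    (eventually_of_mem self_mem_nhdsWithin fun x (hx : x < 1) => hasDerivAt_one_sub_rpow x hx)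
    hderiv_ne
    (tendsto_intervalIntegral_nhdsLT_of_integrableOn hc (hint.mono_set fun y hy => (hsub hy).1))
    (tendsto_one_sub_rpow_nhdsLT (sub_pos.2 hα)) hdiv).congr'
      (eventually_of_mem hIoo fun x hx => ?_)
  rw [intervalIntegral.integral_of_le hx.2.le, integral_Ioc_eq_integral_Ioo]

end AsymptoticsAtOne

section Kernel

variable {p α r : ℝ}

lemma eventually_continuousAt_kernel (hp : 0 < p) :
    ∀ᶠ x in 𝓝[<] (1 : ℝ),
      ContinuousAt (fun σ : ℝ => (1 - σ ^ p) ^ (-α) * σ ^ r) x := by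
  filter_upwards [Ioo_mem_nhdsLT zero_lt_one] with x ⟨hx0, hx1⟩
  have hxp : x ^ p < 1 := Real.rpow_lt_one hx0.le hx1 hp
  exact ((continuousAt_const.sub (continuousAt_id.rpow_const (Or.inl hx0.ne'))).rpow_const
    (Or.inl (sub_pos.2 hxp).ne')).mul (continuousAt_id.rpow_const (Or.inl hx0.ne'))

lemma tendsto_kernel_div_rpow (hp : 0 < p) :
    Tendsto (fun σ : ℝ => (1 - σ ^ p) ^ (-α) * σ ^ r / (1 - σ) ^ (-α)) (𝓝[<] 1)
      (𝓝 (p ^ (-α))) := by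
  have hquot := ((Real.continuousAt_rpow_const _ (-α) (Or.inl hp.ne')).tendsto.comp
    (tendsto_one_sub_rpow_div_one_sub p)).mono_left (nhdsLT_le_nhdsNE (1 : ℝ))
  have hweight : Tendsto (fun σ : ℝ => σ ^ r) (𝓝[<] 1) (𝓝 1) := by
    simpa using ((Real.continuousAt_rpow_const 1 r (Or.inl one_ne_zero)).tendsto).mono_left
      (nhdsWithin_le_nhds (s := Iio 1))
  refine (mul_one (p ^ (-α)) ▸ hquot.mul hweight).congr' ?_
  filter_upwards [Ioo_mem_nhdsLT zero_lt_one] with x ⟨hx0, hx1⟩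
  have hxp : x ^ p ≤ 1 := Real.rpow_le_one hx0.le hx1.le hp.le
  rw [Function.comp_apply, Real.div_rpow (sub_nonneg.2 hxp) (sub_pos.2 hx1).le]
  ring

end Kernel

lemma two_add_mul_sub_one_pos {d m : ℝ} (hd : 0 ≤ d) (hm : max 0 ((d - 2) / d) < m) :
    0 < 2 + d * (m - 1) := by
  rcases hd.eq_or_lt with rfl | hd
  · norm_num
  · have := (div_lt_iff₀ hd).1 ((le_max_right _ _).trans_lt hm)
    linarith

theorem kernel_limit_at_one_general (d : ℕ) (α m b : ℝ)
    (hα : α ∈ Set.Ioo (0:ℝ) 1)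
    (hm : m > max 0 (((d:ℝ) - 2) / d))
    (hb : b = α / (2 + (d:ℝ) * (m - 1))) :
    Filter.Tendsto
      (fun η : ℝ =>
        ((1 / Real.Gamma (1 - α)) *
          ∫ σ in Set.Ioo η 1, (1 - σ ^ (1 / b)) ^ (-α) * σ ^ (1 - (d:ℝ)))
        / (1 - η) ^ (1 - α))
      (nhdsWithin 1 (Set.Ioo 0 1))
      (nhds (b ^ α / Real.Gamma (2 - α))) := by
  obtain ⟨hα0, hα1⟩ := hα
  have hb0 : 0 < b := hb ▸ div_pos hα0 (two_add_mul_sub_one_pos d.cast_nonneg hm)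
  have hp : 0 < 1 / b := one_div_pos.2 hb0
  have hconst : 1 / Real.Gamma (1 - α) * ((1 / b) ^ (-α) / (1 - α))
      = b ^ α / Real.Gamma (2 - α) := by
    have hΓ : Real.Gamma (2 - α) = (1 - α) * Real.Gamma (1 - α) := by
      rw [show (2 : ℝ) - α = 1 - α + 1 by ring, Real.Gamma_add_one (sub_pos.2 hα1).ne']
    rw [hΓ, Real.rpow_neg hp.le, Real.div_rpow zero_le_one hb0.le, Real.one_rpow, inv_div, div_one]
    field_simp
  have hlim := (tendsto_setIntegral_Ioo_div_rpow hα1 (eventually_continuousAt_kernel hp)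
    (tendsto_kernel_div_rpow (r := 1 - (d : ℝ)) hp)).const_mul (1 / Real.Gamma (1 - α))
  rw [hconst] at hlim
  exact (hlim.mono_left (nhdsWithin_mono _ (Ioo_subset_Iio_self (a := 0)))).congr
    fun η => (mul_div_assoc _ _ _).symm

/-- behavior of the kernel profile `Q` at `η = 1⁻`:
`Q(η)/(1-η)^{1-α} → b^α/Γ(2-α)`. -/
theorem kernel_limit_at_one (d : ℕ) (hd : 1 ≤ d) (α m b : ℝ)
    (hα : α ∈ Set.Ioo (0:ℝ) 1)
    (hm : m > max 0 (((d:ℝ) - 2) / d))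
    (hb : b = α / (2 + (d:ℝ) * (m - 1))) :
    Filter.Tendsto
      (fun η : ℝ =>
        ((1 / Real.Gamma (1 - α)) *
          ∫ σ in Set.Ioo η 1, (1 - σ ^ (1 / b)) ^ (-α) * σ ^ (1 - (d:ℝ)))
        / (1 - η) ^ (1 - α))
      (nhdsWithin 1 (Set.Ioo 0 1))
      (nhds (b ^ α / Real.Gamma (2 - α))) :=
  kernel_limit_at_one_general d α m b hα hm hb
end

section
/- Let d ≥ 3 be an integer, α ∈ (0,1), m > (d-2)/d, and b := α/(2+d(m-1)) > 0. Define Q : (0,∞) → ℝ by Q(η) = (1/Γ(1-α)) ∫_η^1 (1-σ^{1/b})^{-α} σ^{1-d} dσ for η ∈ (0,1) and Q(η) = 0 for η ≥ 1. Let U : (0,∞) → [0,∞) be non-increasing with ρ ↦ ρ^{d-1}·U(ρ) Lebesgue integrable on (0,∞). Then z^{d-2} · ∫_z^∞ ρ·Q(z/ρ)·U(ρ) dρ tends to (1/((d-2)·Γ(1-α))) · ∫_0^∞ ρ^{d-1}·U(ρ) dρ as z → 0⁺. -/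
open MeasureTheory Set Filter

/-- The kernel profile `Q(η) = (1/Γ(1-α)) ∫_η^1 (1-σ^{1/b})^{-α} σ^{1-d} dσ` for
`η ∈ (0,1)`; for `η ≥ 1` the interval `(η,1)` is empty, so `Q(η) = 0`. -/
noncomputable def Qker (d : ℕ) (α b : ℝ) (η : ℝ) : ℝ :=
  (1 / Real.Gamma (1 - α)) *
    ∫ σ in Set.Ioo η 1, (1 - σ ^ (1 / b)) ^ (-α) * σ ^ (1 - (d:ℝ))

/-- Bernoulli-type lower bound `min 1 p · (1-σ) ≤ 1 - σ^p`. -/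
lemma one_sub_rpow_lb {p : ℝ} (hp : 0 < p) {σ : ℝ} (h0 : 0 ≤ σ) (h1 : σ ≤ 1) :
    min 1 p * (1 - σ) ≤ 1 - σ ^ p := by
  rcases le_total p 1 with hp1 | hp1
  · have h := Real.geom_mean_le_arith_mean2_weighted hp.le (by linarith : (0:ℝ) ≤ 1 - p)
      h0 zero_le_one (by ring)
    rw [Real.one_rpow, mul_one] at h
    rw [min_eq_right hp1]
    nlinarith
  · rw [min_eq_left hp1, one_mul]
    have : σ ^ p ≤ σ := by
      rcases eq_or_lt_of_le h0 with h | h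
      · rw [← h, Real.zero_rpow hp.ne']
      · calc σ ^ p ≤ σ ^ (1:ℝ) := Real.rpow_le_rpow_of_exponent_ge h h1 hp1
          _ = σ := Real.rpow_one σ
    linarith

lemma integrableOn_one_sub_rpow {α : ℝ} (hα : α < 1) :
    IntegrableOn (fun σ : ℝ => (1 - σ) ^ (-α)) (Ioo (0:ℝ) 1) := by
  have h : IntervalIntegrable (fun x : ℝ => x ^ (-α)) volume 0 1 :=
    intervalIntegral.intervalIntegrable_rpow' (by linarith)
  have h2 : IntervalIntegrable (fun x : ℝ => (1 - x) ^ (-α)) volume 0 1 := by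
    simpa using (h.comp_sub_left 1).symm
  exact h2.1.mono_set Ioo_subset_Ioc_self

/-- `(1-x)^{-α} ≤ 1 + 2x` for `x ∈ [0,1/2]`, `0 < α ≤ 1`. -/
lemma one_sub_rpow_neg_le {α x : ℝ} (hα : α ≤ 1) (hx0 : 0 ≤ x) (hx : x ≤ 1/2) :
    (1 - x) ^ (-α) ≤ 1 + 2 * x := by
  have h1x : (0:ℝ) < 1 - x := by linarith
  have h1 : (1 - x) ^ (-α) ≤ (1 - x) ^ (-1 : ℝ) :=
    Real.rpow_le_rpow_of_exponent_ge h1x (by linarith) (by linarith)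
  rw [Real.rpow_neg_one] at h1
  have h2 : (1 - x)⁻¹ ≤ 1 + 2 * x := by
    rw [inv_le_iff_one_le_mul₀ h1x]  -- maybe wrong name
    nlinarith
  linarith

/-- The integrand of `Qker`. -/
noncomputable def fker (d : ℕ) (α b : ℝ) (σ : ℝ) : ℝ :=
  (1 - σ ^ (1 / b)) ^ (-α) * σ ^ (1 - (d:ℝ))

lemma fker_meas (d : ℕ) (α b : ℝ) : Measurable (fker d α b) := by
  unfold fker
  exact ((measurable_const.sub (measurable_id.pow measurable_const)).pow
    measurable_const).mul (measurable_id.pow measurable_const)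

lemma fker_nonneg (d : ℕ) {α b : ℝ} (hb : 0 < b) {σ : ℝ} (hσ : σ ∈ Ioo (0:ℝ) 1) :
    0 ≤ fker d α b σ := by
  have h1 : σ ^ (1 / b) < 1 := Real.rpow_lt_one hσ.1.le hσ.2 (by positivity)
  exact mul_nonneg (Real.rpow_nonneg (by linarith) _) (Real.rpow_nonneg hσ.1.le _)

lemma fker_one_le (d : ℕ) {α b : ℝ} (hα : α ∈ Ioo (0:ℝ) 1) (hb : 0 < b) {σ : ℝ}
    (hσ : σ ∈ Ioo (0:ℝ) 1) : σ ^ (1 - (d:ℝ)) ≤ fker d α b σ := by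
  have h1 : σ ^ (1 / b) < 1 := Real.rpow_lt_one hσ.1.le hσ.2 (by positivity)
  have h0 : 0 < σ ^ (1 / b) := Real.rpow_pos_of_pos hσ.1 _
  have hbase : 1 ≤ (1 - σ ^ (1 / b)) ^ (-α) :=
    Real.one_le_rpow_of_pos_of_le_one_of_nonpos (by linarith) (by linarith) (by linarith [hα.1])
  unfold fker
  nlinarith [Real.rpow_nonneg hσ.1.le (1 - (d:ℝ))]

/-- Pointwise upper bound for `fker` on `(η, 1)`. -/
lemma fker_le (d : ℕ) (hd : 3 ≤ d) {α b : ℝ} (hα : α ∈ Ioo (0:ℝ) 1) (hb : 0 < b) {η σ : ℝ}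
    (hη : 0 < η) (hσ : σ ∈ Ioo η 1) :
    fker d α b σ ≤ (min 1 (1/b)) ^ (-α) * η ^ (1 - (d:ℝ)) * (1 - σ) ^ (-α) := by
  have hσ0 : 0 < σ := lt_trans hη hσ.1
  have hc : 0 < min 1 (1/b) := lt_min one_pos (by positivity)
  have hlb : min 1 (1/b) * (1 - σ) ≤ 1 - σ ^ (1/b) :=
    one_sub_rpow_lb (by positivity) hσ0.le hσ.2.le
  have hx : 0 < min 1 (1/b) * (1 - σ) := by
    have : 0 < 1 - σ := by linarith [hσ.2]
    positivity
  have h1 : (1 - σ ^ (1/b)) ^ (-α) ≤ (min 1 (1/b) * (1 - σ)) ^ (-α) :=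
    Real.rpow_le_rpow_of_nonpos hx hlb (by linarith [hα.1])
  rw [Real.mul_rpow hc.le (by linarith [hσ.2] : (0:ℝ) ≤ 1 - σ)] at h1
  have hd3 : (3:ℝ) ≤ (d:ℝ) := by exact_mod_cast hd
  have h2 : σ ^ (1 - (d:ℝ)) ≤ η ^ (1 - (d:ℝ)) :=
    Real.rpow_le_rpow_of_nonpos hη hσ.1.le (by linarith)
  unfold fker
  calc (1 - σ ^ (1/b)) ^ (-α) * σ ^ (1 - (d:ℝ))
      ≤ (min 1 (1/b) ^ (-α) * (1 - σ) ^ (-α)) * (η ^ (1 - (d:ℝ))) := by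
        exact mul_le_mul h1 h2 (Real.rpow_nonneg hσ0.le _)
          (mul_nonneg (Real.rpow_nonneg hc.le _) (Real.rpow_nonneg (by linarith [hσ.2]) _))
    _ = min 1 (1/b) ^ (-α) * η ^ (1 - (d:ℝ)) * (1 - σ) ^ (-α) := by ring

lemma fker_int (d : ℕ) (hd : 3 ≤ d) {α b : ℝ} (hα : α ∈ Ioo (0:ℝ) 1) (hb : 0 < b) {η : ℝ} (hη : 0 < η) :
    IntegrableOn (fker d α b) (Ioo η 1) := by
  rcases le_or_gt 1 η with h1 | h1
  · rw [Ioo_eq_empty (by linarith)]; exact integrableOn_empty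
  · have hbd : IntegrableOn
        (fun σ : ℝ => (min 1 (1/b)) ^ (-α) * η ^ (1 - (d:ℝ)) * (1 - σ) ^ (-α)) (Ioo η 1) :=
      ((integrableOn_one_sub_rpow hα.2).mono_set (Ioo_subset_Ioo_left hη.le)).const_mul _
    refine hbd.mono' ((fker_meas d α b).aestronglyMeasurable) ?_
    filter_upwards [ae_restrict_mem measurableSet_Ioo] with σ hσ
    rw [Real.norm_eq_abs, abs_of_nonneg (fker_nonneg d hb ⟨lt_trans hη hσ.1, hσ.2⟩)]
    exact fker_le d hd hα hb hη hσ

lemma Qker_nonneg (d : ℕ) {α b : ℝ} (hα : α ∈ Ioo (0:ℝ) 1) (hb : 0 < b) {η : ℝ}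
    (hη : 0 < η) : 0 ≤ Qker d α b η := by
  have hΓ : 0 < Real.Gamma (1 - α) := Real.Gamma_pos_of_pos (by linarith [hα.2])
  refine mul_nonneg (by positivity) (setIntegral_nonneg measurableSet_Ioo fun σ hσ => ?_)
  exact fker_nonneg d hb ⟨lt_trans hη hσ.1, hσ.2⟩

lemma Qker_monoOn (d : ℕ) (hd : 3 ≤ d) {α b : ℝ} (hα : α ∈ Ioo (0:ℝ) 1) (hb : 0 < b) {z : ℝ} (hz : 0 < z) :
    MonotoneOn (fun ρ => Qker d α b (z / ρ)) (Ioi z) := by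
  intro ρ₁ h₁ ρ₂ h₂ h12
  have hρ₁ : 0 < ρ₁ := lt_trans hz h₁
  have hle : z / ρ₂ ≤ z / ρ₁ := by gcongr
  have hpos : 0 < z / ρ₂ := div_pos hz (lt_trans hz h₂)
  have hΓ : 0 < Real.Gamma (1 - α) := Real.Gamma_pos_of_pos (by linarith [hα.2])
  unfold Qker
  have hmono : (∫ σ in Ioo (z / ρ₁) 1, (1 - σ ^ (1 / b)) ^ (-α) * σ ^ (1 - (d:ℝ))) ≤
      ∫ σ in Ioo (z / ρ₂) 1, (1 - σ ^ (1 / b)) ^ (-α) * σ ^ (1 - (d:ℝ)) := by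
    refine setIntegral_mono_set (fker_int d hd hα hb hpos) ?_
      ((Ioo_subset_Ioo_left hle).eventuallyLE)
    filter_upwards [ae_restrict_mem measurableSet_Ioo] with σ hσ
    exact fker_nonneg d hb ⟨lt_trans hpos hσ.1, hσ.2⟩
  exact mul_le_mul_of_nonneg_left hmono (by positivity)

lemma integrableOn_rpow_Ioc {r a c : ℝ} (ha : 0 < a) :
    IntegrableOn (fun σ : ℝ => σ ^ r) (Ioc a c) := by
  rcases le_or_gt c a with h | h
  · rw [Ioc_eq_empty (not_lt.2 h)]; exact integrableOn_empty
  · have : (0:ℝ) ∉ Set.uIcc a c := by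
      rw [Set.uIcc_of_le h.le]
      exact fun hmem => absurd hmem.1 (not_le.2 ha)
    exact (intervalIntegral.intervalIntegrable_rpow (μ := volume) (r := r) (Or.inr this)).1

lemma integral_rpow_Ioo (d : ℕ) (hd : 3 ≤ d) {η : ℝ} (hη : η ∈ Ioo (0:ℝ) 1) :
    ∫ σ in Ioo η 1, σ ^ (1 - (d:ℝ)) = (1 - η ^ (2 - (d:ℝ))) / (2 - (d:ℝ)) := by
  have hd3 : (3:ℝ) ≤ (d:ℝ) := by exact_mod_cast hd
  rw [← integral_Ioc_eq_integral_Ioo, ← intervalIntegral.integral_of_le hη.2.le]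
  rw [integral_rpow (Or.inr ⟨by intro h; rw [sub_eq_iff_eq_add] at h; norm_num at h; linarith,
    by rw [Set.uIcc_of_le hη.2.le]; exact fun hmem => absurd hmem.1 (not_le.2 hη.1)⟩)]
  rw [show (1:ℝ) - (d:ℝ) + 1 = 2 - (d:ℝ) by ring, Real.one_rpow]

lemma integral_rpow_Ioc {r a c : ℝ} (ha : 0 < a) (hac : a ≤ c) (hr : r ≠ -1) :
    ∫ σ in Ioc a c, σ ^ r = (c ^ (r+1) - a ^ (r+1)) / (r+1) := by
  rw [← intervalIntegral.integral_of_le hac]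
  exact integral_rpow (Or.inr ⟨hr,
    by rw [Set.uIcc_of_le hac]; exact fun hmem => absurd hmem.1 (not_le.2 ha)⟩)

set_option maxHeartbeats 1000000 in
lemma Qker_props (d : ℕ) (hd : 3 ≤ d) {α b : ℝ} (hα : α ∈ Ioo (0:ℝ) 1) (hb : 0 < b) :
    ∃ e K0 : ℝ, 0 < e ∧ 0 < K0 ∧ ∀ η ∈ Ioo (0:ℝ) 1,
      |η ^ ((d:ℝ) - 2) * Qker d α b η -
          (1 - η ^ ((d:ℝ) - 2)) / (((d:ℝ) - 2) * Real.Gamma (1 - α))| ≤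
        K0 * (η ^ e + η ^ ((d:ℝ) - 2)) := by
  have hd3 : (3:ℝ) ≤ (d:ℝ) := by exact_mod_cast hd
  have hΓ : 0 < Real.Gamma (1 - α) := Real.Gamma_pos_of_pos (by linarith [hα.2])
  set c := min 1 (1/b) with hc_def
  have hc : 0 < c := lt_min one_pos (by positivity)
  set δ := min ((1/2 : ℝ) ^ b) (1/2 : ℝ) with hδ_def
  have hδ0 : 0 < δ := lt_min (Real.rpow_pos_of_pos (by norm_num) b) (by norm_num)
  have hδhalf : δ ≤ 1/2 := min_le_right _ _
  have hδ1 : δ < 1 := by linarith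
  set e := min (1/b) (((d:ℝ) - 2)/2) with he_def
  have he0 : 0 < e := lt_min (by positivity) (by linarith)
  have heD : e ≤ ((d:ℝ)-2)/2 := min_le_right _ _
  have heb : e ≤ 1/b := min_le_left _ _
  have hDe : 0 < (d:ℝ) - 2 - e := by linarith
  have hx_neg : e + 2 - (d:ℝ) < 0 := by linarith
  set K := c ^ (-α) * δ ^ (1 - (d:ℝ)) * ∫ σ in Ioo δ 1, (1 - σ) ^ (-α) with hK_def
  have hIδ : 0 ≤ ∫ σ in Ioo δ 1, (1 - σ) ^ (-α) :=
    setIntegral_nonneg measurableSet_Ioo fun σ hσ => Real.rpow_nonneg (by linarith [hσ.2]) _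
  have hK0 : 0 ≤ K :=
    mul_nonneg (mul_nonneg (Real.rpow_nonneg hc.le _) (Real.rpow_nonneg hδ0.le _)) hIδ
  -- pointwise bound on (0, δ]
  have claim_small : ∀ σ : ℝ, 0 < σ → σ ≤ δ →
      fker d α b σ - σ ^ (1-(d:ℝ)) ≤ 2 * σ ^ (e + 1 - (d:ℝ)) := by
    intro σ h0 h1
    have hσ1 : σ < 1 := lt_of_le_of_lt h1 hδ1
    have hx_le : σ ^ (1/b) ≤ 1/2 := by
      have h2 : σ ^ (1/b) ≤ ((1/2:ℝ) ^ b) ^ (1/b) :=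
        Real.rpow_le_rpow h0.le (le_trans h1 (min_le_left _ _)) (by positivity)
      rwa [← Real.rpow_mul (by norm_num : (0:ℝ) ≤ 1/2), mul_one_div_cancel hb.ne',
        Real.rpow_one] at h2
    have hx0 : 0 ≤ σ ^ (1/b) := Real.rpow_nonneg h0.le _
    have hle1 : (1 - σ ^ (1/b)) ^ (-α) ≤ 1 + 2 * σ ^ (1/b) :=
      one_sub_rpow_neg_le hα.2.le hx0 hx_le
    have hpe : σ ^ (1/b) ≤ σ ^ e := Real.rpow_le_rpow_of_exponent_ge h0 hσ1.le heb
    have hmul : σ ^ e * σ ^ (1 - (d:ℝ)) = σ ^ (e + 1 - (d:ℝ)) := by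
      rw [← Real.rpow_add h0]; congr 1; ring
    have hρnn : 0 ≤ σ ^ (1 - (d:ℝ)) := Real.rpow_nonneg h0.le _
    unfold fker
    calc (1 - σ ^ (1/b)) ^ (-α) * σ ^ (1-(d:ℝ)) - σ ^ (1-(d:ℝ))
        = ((1 - σ ^ (1/b)) ^ (-α) - 1) * σ ^ (1-(d:ℝ)) := by ring
      _ ≤ (2 * σ ^ (1/b)) * σ ^ (1-(d:ℝ)) := by nlinarith
      _ ≤ (2 * σ ^ e) * σ ^ (1-(d:ℝ)) := by nlinarith
      _ = 2 * σ ^ (e + 1 - (d:ℝ)) := by rw [mul_assoc, hmul]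
  -- pointwise bound on (δ, 1)
  have claim_big : ∀ σ ∈ Ioo δ 1,
      fker d α b σ - σ ^ (1-(d:ℝ)) ≤ c ^ (-α) * δ ^ (1-(d:ℝ)) * (1 - σ) ^ (-α) := by
    intro σ hσ
    have h1 := fker_le d hd hα hb hδ0 hσ
    have h2 : 0 ≤ σ ^ (1-(d:ℝ)) := Real.rpow_nonneg (le_of_lt (lt_trans hδ0 hσ.1)) _
    rw [← hc_def] at h1
    linarith
  have hint_h : ∀ {η : ℝ}, 0 < η →
      IntegrableOn (fun σ => fker d α b σ - σ ^ (1-(d:ℝ))) (Ioo η 1) := fun {η} hη =>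
    (fker_int d hd hα hb hη).sub ((integrableOn_rpow_Ioc hη).mono_set Ioo_subset_Ioc_self)
  have h_nonneg : ∀ σ ∈ Ioo (0:ℝ) 1, 0 ≤ fker d α b σ - σ ^ (1-(d:ℝ)) := fun σ hσ =>
    sub_nonneg.2 (fker_one_le d hα hb hσ)
  have hK_tail : (∫ σ in Ioo δ 1, (fker d α b σ - σ ^ (1-(d:ℝ)))) ≤ K := by
    have hIbd : IntegrableOn (fun σ : ℝ => c ^ (-α) * δ ^ (1-(d:ℝ)) * (1-σ) ^ (-α)) (Ioo δ 1) :=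
      ((integrableOn_one_sub_rpow hα.2).mono_set (Ioo_subset_Ioo_left hδ0.le)).const_mul _
    have h1 := setIntegral_mono_on (hint_h hδ0) hIbd measurableSet_Ioo claim_big
    rw [integral_const_mul] at h1
    exact h1
  -- bound for the error integral
  have hBbd : ∀ η ∈ Ioo (0:ℝ) 1, (∫ σ in Ioo η 1, (fker d α b σ - σ ^ (1-(d:ℝ)))) ≤
      2/((d:ℝ)-2-e) * η ^ (e+2-(d:ℝ)) + K := by
    intro η hη
    have hηx : 0 ≤ η ^ (e+2-(d:ℝ)) := Real.rpow_nonneg hη.1.le _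
    rcases le_or_gt δ η with hcase | hcase
    · have h1 : (∫ σ in Ioo η 1, (fker d α b σ - σ ^ (1-(d:ℝ)))) ≤
          ∫ σ in Ioo δ 1, (fker d α b σ - σ ^ (1-(d:ℝ))) := by
        refine setIntegral_mono_set (hint_h hδ0) ?_ (Ioo_subset_Ioo_left hcase).eventuallyLE
        filter_upwards [ae_restrict_mem measurableSet_Ioo] with σ hσ
        exact h_nonneg σ ⟨lt_trans hδ0 hσ.1, hσ.2⟩
      have h2 : 0 ≤ 2/((d:ℝ)-2-e) * η ^ (e+2-(d:ℝ)) := mul_nonneg (by positivity) hηx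
      linarith [hK_tail]
    · have hsplit : Ioo η 1 = Ioc η δ ∪ Ioo δ 1 := (Set.Ioc_union_Ioo_eq_Ioo hcase.le hδ1).symm
      have hdisj : Disjoint (Ioc η δ) (Ioo δ 1) := by
        rw [Set.disjoint_left]; rintro x ⟨_, hx1⟩ ⟨hx2, _⟩; exact absurd hx1 (not_le.2 hx2)
      have hsub : Ioc η δ ⊆ Ioo η 1 := fun x hx => ⟨hx.1, lt_of_le_of_lt hx.2 hδ1⟩
      have hint1 : IntegrableOn (fun σ => fker d α b σ - σ ^ (1-(d:ℝ))) (Ioc η δ) :=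
        (hint_h hη.1).mono_set hsub
      have hint2 : IntegrableOn (fun σ => fker d α b σ - σ ^ (1-(d:ℝ))) (Ioo δ 1) := hint_h hδ0
      rw [hsplit, setIntegral_union hdisj measurableSet_Ioo hint1 hint2]
      have hfirst : (∫ σ in Ioc η δ, (fker d α b σ - σ ^ (1-(d:ℝ)))) ≤
          2 * ((δ ^ (e+2-(d:ℝ)) - η ^ (e+2-(d:ℝ)))/(e+2-(d:ℝ))) := by
        have hb2 : IntegrableOn (fun σ : ℝ => 2 * σ ^ (e+1-(d:ℝ))) (Ioc η δ) :=
          (integrableOn_rpow_Ioc hη.1).const_mul 2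
        have h1 := setIntegral_mono_on hint1 hb2 measurableSet_Ioc
          (fun σ hσ => claim_small σ (lt_trans hη.1 hσ.1) hσ.2)
        rw [integral_const_mul, integral_rpow_Ioc hη.1 hcase.le (by intro hcontra; linarith)]
          at h1
        rw [show e+1-(d:ℝ)+1 = e+2-(d:ℝ) by ring] at h1
        exact h1
      have hcomb : 2 * ((δ ^ (e+2-(d:ℝ)) - η ^ (e+2-(d:ℝ)))/(e+2-(d:ℝ))) ≤
          2/((d:ℝ)-2-e) * η ^ (e+2-(d:ℝ)) := by
        have hδx : 0 ≤ δ ^ (e+2-(d:ℝ)) := Real.rpow_nonneg hδ0.le _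
        have h1 : (δ ^ (e+2-(d:ℝ)) - η ^ (e+2-(d:ℝ)))/(e+2-(d:ℝ)) =
            (η ^ (e+2-(d:ℝ)) - δ ^ (e+2-(d:ℝ)))/((d:ℝ)-2-e) := by
          rw [div_eq_div_iff (ne_of_lt hx_neg) (ne_of_gt hDe)]
          ring
        rw [h1]
        have h2 : (η ^ (e+2-(d:ℝ)) - δ ^ (e+2-(d:ℝ)))/((d:ℝ)-2-e) ≤
            η ^ (e+2-(d:ℝ))/((d:ℝ)-2-e) := (div_le_div_iff_of_pos_right hDe).2 (by linarith)
        calc 2 * ((η ^ (e+2-(d:ℝ)) - δ ^ (e+2-(d:ℝ)))/((d:ℝ)-2-e))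
            ≤ 2 * (η ^ (e+2-(d:ℝ))/((d:ℝ)-2-e)) := by linarith
          _ = 2/((d:ℝ)-2-e) * η ^ (e+2-(d:ℝ)) := by ring
      linarith [hK_tail]
  refine ⟨e, (1/Real.Gamma (1-α)) * (2/((d:ℝ)-2-e) + K) + 1, he0, ?_, ?_⟩
  · have h1 : 0 ≤ (1/Real.Gamma (1-α)) * (2/((d:ℝ)-2-e) + K) :=
      mul_nonneg (by positivity) (add_nonneg (by positivity) hK0)
    linarith
  intro η hη
  have hη0 : 0 < η := hη.1
  have int1 : IntegrableOn (fun σ : ℝ => σ^(1-(d:ℝ))) (Ioo η 1) :=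
    (integrableOn_rpow_Ioc hη0).mono_set Ioo_subset_Ioc_self
  have int2 := hint_h hη0
  set B := ∫ σ in Ioo η 1, (fker d α b σ - σ ^ (1-(d:ℝ))) with hB_def
  have hBnn : 0 ≤ B :=
    setIntegral_nonneg measurableSet_Ioo fun σ hσ => h_nonneg σ ⟨lt_trans hη0 hσ.1, hσ.2⟩
  have hfun : ∀ σ : ℝ, (1 - σ ^ (1/b)) ^ (-α) * σ ^ (1-(d:ℝ)) =
      σ^(1-(d:ℝ)) + (fker d α b σ - σ^(1-(d:ℝ))) := by intro σ; unfold fker; ring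
  have hQ : Qker d α b η = (1/Real.Gamma (1-α)) * ((1 - η^(2-(d:ℝ)))/(2-(d:ℝ)) + B) := by
    unfold Qker
    congr 1
    calc ∫ σ in Ioo η 1, (1 - σ ^ (1/b)) ^ (-α) * σ ^ (1-(d:ℝ))
        = ∫ σ in Ioo η 1, (σ^(1-(d:ℝ)) + (fker d α b σ - σ^(1-(d:ℝ)))) := by simp only [hfun]
      _ = (∫ σ in Ioo η 1, σ^(1-(d:ℝ))) + B := integral_add int1 int2
      _ = (1 - η^(2-(d:ℝ)))/(2-(d:ℝ)) + B := by rw [integral_rpow_Ioo d hd hη]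
  have hmulpow : η ^ ((d:ℝ)-2) * η ^ (2-(d:ℝ)) = 1 := by
    rw [← Real.rpow_add hη0]; norm_num
  have h2D : (2:ℝ)-(d:ℝ) ≠ 0 := by linarith
  have hD2 : ((d:ℝ)-2) ≠ 0 := by linarith
  have hA : η^((d:ℝ)-2) * ((1 - η^(2-(d:ℝ)))/(2-(d:ℝ))) = (1 - η^((d:ℝ)-2))/((d:ℝ)-2) := by
    calc η^((d:ℝ)-2) * ((1 - η^(2-(d:ℝ)))/(2-(d:ℝ)))
        = (η^((d:ℝ)-2) - η^((d:ℝ)-2) * η^(2-(d:ℝ)))/(2-(d:ℝ)) := by ring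
      _ = (η^((d:ℝ)-2) - 1)/(2-(d:ℝ)) := by rw [hmulpow]
      _ = (1 - η^((d:ℝ)-2))/((d:ℝ)-2) := by rw [div_eq_div_iff h2D hD2]; ring
  have key : η ^ ((d:ℝ)-2) * Qker d α b η -
      (1 - η ^ ((d:ℝ)-2)) / (((d:ℝ)-2) * Real.Gamma (1-α))
      = (1/Real.Gamma (1-α)) * (η ^ ((d:ℝ)-2) * B) := by
    rw [hQ]
    have h1 : η ^ ((d:ℝ)-2) * ((1/Real.Gamma (1-α)) * ((1 - η^(2-(d:ℝ)))/(2-(d:ℝ)) + B)) =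
        (1/Real.Gamma (1-α)) * (η^((d:ℝ)-2) * ((1 - η^(2-(d:ℝ)))/(2-(d:ℝ)))) +
        (1/Real.Gamma (1-α)) * (η^((d:ℝ)-2) * B) := by ring
    rw [h1, hA]
    have h2 : (1/Real.Gamma (1-α)) * ((1 - η^((d:ℝ)-2))/((d:ℝ)-2)) =
        (1 - η ^ ((d:ℝ)-2)) / (((d:ℝ)-2) * Real.Gamma (1-α)) := by
      rw [div_mul_div_comm, one_mul, mul_comm (Real.Gamma (1-α))]
    rw [h2]; ring
  have hηD : 0 ≤ η ^ ((d:ℝ)-2) := Real.rpow_nonneg hη0.le _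
  rw [key, abs_of_nonneg (mul_nonneg (by positivity) (mul_nonneg hηD hBnn))]
  have hBb := hBbd η hη
  have hmule : η ^ ((d:ℝ)-2) * η ^ (e+2-(d:ℝ)) = η ^ e := by
    rw [← Real.rpow_add hη0]; congr 1; ring
  have hstep : η ^ ((d:ℝ)-2) * B ≤ 2/((d:ℝ)-2-e) * η ^ e + K * η ^ ((d:ℝ)-2) := by
    calc η ^ ((d:ℝ)-2) * B ≤ η ^ ((d:ℝ)-2) * (2/((d:ℝ)-2-e) * η ^ (e+2-(d:ℝ)) + K) :=
          mul_le_mul_of_nonneg_left hBb hηD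
      _ = 2/((d:ℝ)-2-e) * (η ^ ((d:ℝ)-2) * η ^ (e+2-(d:ℝ))) + K * η ^ ((d:ℝ)-2) := by ring
      _ = 2/((d:ℝ)-2-e) * η ^ e + K * η ^ ((d:ℝ)-2) := by rw [hmule]
  have hX : 0 ≤ η ^ e := Real.rpow_nonneg hη0.le _
  have hG : (0:ℝ) < 1/Real.Gamma (1-α) := by positivity
  have ha : (0:ℝ) < 2/((d:ℝ)-2-e) := by positivity
  calc (1/Real.Gamma (1-α)) * (η ^ ((d:ℝ)-2) * B)
      ≤ (1/Real.Gamma (1-α)) * (2/((d:ℝ)-2-e) * η ^ e + K * η ^ ((d:ℝ)-2)) :=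
        mul_le_mul_of_nonneg_left hstep hG.le
    _ ≤ ((1/Real.Gamma (1-α)) * (2/((d:ℝ)-2-e) + K) + 1) * (η ^ e + η ^ ((d:ℝ)-2)) := by
        nlinarith [mul_nonneg (mul_nonneg hG.le hK0) hX,
          mul_nonneg (mul_nonneg hG.le ha.le) hηD, hX, hηD]

lemma rpow_tendsto_zero {q : ℝ} (hq : 0 < q) :
    Tendsto (fun η : ℝ => η ^ q) (nhdsWithin 0 (Ioi 0)) (nhds 0) := by
  have h := (Real.continuousAt_rpow_const 0 q (Or.inr hq.le)).tendsto
  rw [Real.zero_rpow hq.ne'] at h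
  exact h.mono_left nhdsWithin_le_nhds

lemma Qker_tendsto (d : ℕ) (hd : 3 ≤ d) {α b : ℝ} (hα : α ∈ Ioo (0:ℝ) 1) (hb : 0 < b) :
    Tendsto (fun η : ℝ => η ^ ((d:ℝ)-2) * Qker d α b η) (nhdsWithin 0 (Ioi 0))
      (nhds (1 / (((d:ℝ)-2) * Real.Gamma (1-α)))) := by
  obtain ⟨e, K0, he0, hK0, hmain⟩ := Qker_props d hd hα hb
  have hd3 : (3:ℝ) ≤ (d:ℝ) := by exact_mod_cast hd
  have hmainlim : Tendsto (fun η : ℝ => (1 - η ^ ((d:ℝ)-2)) / (((d:ℝ)-2) * Real.Gamma (1-α)))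
      (nhdsWithin 0 (Ioi 0)) (nhds (1 / (((d:ℝ)-2) * Real.Gamma (1-α)))) := by
    have h1 := (tendsto_const_nhds (x := (1:ℝ)) (f := nhdsWithin (0:ℝ) (Ioi 0))).sub
      (rpow_tendsto_zero (by linarith : (0:ℝ) < (d:ℝ)-2))
    have h2 := h1.div_const (((d:ℝ)-2) * Real.Gamma (1-α))
    simpa using h2
  have herr : Tendsto (fun η : ℝ => η ^ ((d:ℝ)-2) * Qker d α b η -
      (1 - η ^ ((d:ℝ)-2)) / (((d:ℝ)-2) * Real.Gamma (1-α))) (nhdsWithin 0 (Ioi 0)) (nhds 0) := by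
    apply squeeze_zero_norm' (a := fun η : ℝ => K0 * (η ^ e + η ^ ((d:ℝ)-2)))
    · filter_upwards [Ioo_mem_nhdsGT one_pos] with η hη
      exact hmain η hη
    · have h3 := ((rpow_tendsto_zero he0).add (rpow_tendsto_zero
        (by linarith : (0:ℝ) < (d:ℝ)-2))).const_mul K0
      simpa using h3
  have heq : (fun η : ℝ => η ^ ((d:ℝ)-2) * Qker d α b η) =
      fun η => (1 - η ^ ((d:ℝ)-2)) / (((d:ℝ)-2) * Real.Gamma (1-α)) +
        (η ^ ((d:ℝ)-2) * Qker d α b η -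
          (1 - η ^ ((d:ℝ)-2)) / (((d:ℝ)-2) * Real.Gamma (1-α))) := by
    funext η; ring
  rw [heq]
  simpa using hmainlim.add herr

lemma Qker_bdd (d : ℕ) (hd : 3 ≤ d) {α b : ℝ} (hα : α ∈ Ioo (0:ℝ) 1) (hb : 0 < b) :
    ∃ C : ℝ, 0 < C ∧ ∀ η ∈ Ioo (0:ℝ) 1, η ^ ((d:ℝ)-2) * Qker d α b η ≤ C := by
  obtain ⟨e, K0, he0, hK0, hmain⟩ := Qker_props d hd hα hb
  have hd3 : (3:ℝ) ≤ (d:ℝ) := by exact_mod_cast hd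
  have hΓ : 0 < Real.Gamma (1 - α) := Real.Gamma_pos_of_pos (by linarith [hα.2])
  have hpos : 0 < ((d:ℝ)-2) * Real.Gamma (1-α) := mul_pos (by linarith) hΓ
  refine ⟨2 * K0 + 1 / (((d:ℝ)-2) * Real.Gamma (1-α)) + 1, by positivity, ?_⟩
  intro η hη
  have h1 := (abs_le.1 (hmain η hη)).2
  have h2 : η ^ e ≤ 1 := Real.rpow_le_one hη.1.le hη.2.le he0.le
  have h3 : η ^ ((d:ℝ)-2) ≤ 1 := Real.rpow_le_one hη.1.le hη.2.le (by linarith)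
  have h5 : (1 - η ^ ((d:ℝ)-2)) / (((d:ℝ)-2) * Real.Gamma (1-α)) ≤
      1 / (((d:ℝ)-2) * Real.Gamma (1-α)) := by
    have h4 : 0 ≤ η ^ ((d:ℝ)-2) := Real.rpow_nonneg hη.1.le _
    exact (div_le_div_iff_of_pos_right hpos).2 (by linarith)
  nlinarith [mul_le_mul_of_nonneg_left (add_le_add h2 h3) hK0.le]


set_option maxHeartbeats 1000000 in
/-- in dimension `d ≥ 3`, for a non-increasing nonnegative `U` with
`ρ^{d-1}·U(ρ)` integrable on `(0,∞)`,
`z^{d-2}·∫_z^∞ ρ·Q(z/ρ)·U(ρ) dρ → (1/((d-2)Γ(1-α)))·∫_0^∞ ρ^{d-1} U(ρ) dρ` as `z → 0⁺`. -/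
theorem singular_behavior_at_origin (d : ℕ) (hd : 3 ≤ d) (α m b : ℝ)
    (hα : α ∈ Set.Ioo (0:ℝ) 1)
    (hm : m > ((d:ℝ) - 2) / d)
    (hb : b = α / (2 + (d:ℝ) * (m - 1)))
    (U : ℝ → ℝ)
    (hU0 : ∀ ρ, 0 < ρ → 0 ≤ U ρ)
    (hUmono : AntitoneOn U (Set.Ioi 0))
    (hUint : MeasureTheory.IntegrableOn (fun ρ => ρ ^ ((d:ℝ) - 1) * U ρ) (Set.Ioi 0)) :
    Filter.Tendsto
      (fun z : ℝ => z ^ ((d:ℝ) - 2) * ∫ ρ in Set.Ioi z, ρ * Qker d α b (z / ρ) * U ρ)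
      (nhdsWithin 0 (Set.Ioi 0))
      (nhds ((1 / (((d:ℝ) - 2) * Real.Gamma (1 - α))) *
        ∫ ρ in Set.Ioi (0:ℝ), ρ ^ ((d:ℝ) - 1) * U ρ)) := by
  have hd3 : (3:ℝ) ≤ (d:ℝ) := by exact_mod_cast hd
  have hΓ : 0 < Real.Gamma (1 - α) := Real.Gamma_pos_of_pos (by linarith [hα.2])
  have hdpos : (0:ℝ) < (d:ℝ) := by linarith
  have hden : 0 < 2 + (d:ℝ) * (m - 1) := by
    rw [gt_iff_lt, div_lt_iff₀ hdpos] at hm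
    nlinarith
  have hb0 : 0 < b := hb ▸ div_pos hα.1 hden
  obtain ⟨C, hC, hCbd⟩ := Qker_bdd d hd hα hb0
  set L := 1 / (((d:ℝ) - 2) * Real.Gamma (1 - α)) with hL_def
  have hgt := Qker_tendsto d hd hα hb0
  have key : ∀ z ρ : ℝ, 0 < z → z < ρ →
      z ^ ((d:ℝ)-2) * (ρ * Qker d α b (z/ρ) * U ρ) =
      ρ ^ ((d:ℝ)-1) * ((z/ρ) ^ ((d:ℝ)-2) * Qker d α b (z/ρ)) * U ρ := by
    intro z ρ hz hzρ
    have hρ : 0 < ρ := lt_trans hz hzρ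
    have h1 : (z/ρ) ^ ((d:ℝ)-2) = z ^ ((d:ℝ)-2) / ρ ^ ((d:ℝ)-2) :=
      Real.div_rpow hz.le hρ.le _
    have h2 : ρ ^ ((d:ℝ)-1) = ρ ^ ((d:ℝ)-2) * ρ := by
      rw [show (d:ℝ)-1 = ((d:ℝ)-2) + 1 by ring, Real.rpow_add hρ, Real.rpow_one]
    have h3 : ρ ^ ((d:ℝ)-2) ≠ 0 := (Real.rpow_pos_of_pos hρ _).ne'
    rw [h1, h2]
    field_simp
  have hDCT := MeasureTheory.tendsto_integral_filter_of_dominated_convergence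
    (μ := volume.restrict (Ioi (0:ℝ)))
    (l := nhdsWithin (0:ℝ) (Ioi 0))
    (F := fun z : ℝ => Set.indicator (Ioi z)
      (fun ρ => z ^ ((d:ℝ)-2) * (ρ * Qker d α b (z/ρ) * U ρ)))
    (f := fun ρ => L * (ρ ^ ((d:ℝ)-1) * U ρ))
    (fun ρ => C * (ρ ^ ((d:ℝ)-1) * U ρ)) ?meas ?bd ?bint ?lim
  case meas =>
    filter_upwards [self_mem_nhdsWithin] with z hz
    rw [aestronglyMeasurable_indicator_iff measurableSet_Ioi]
    have hres : (volume.restrict (Ioi (0:ℝ))).restrict (Ioi z) = volume.restrict (Ioi z) := by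
      rw [Measure.restrict_restrict measurableSet_Ioi,
        Set.inter_eq_left.2 (Ioi_subset_Ioi (le_of_lt hz))]
    rw [hres]
    have hQm : AEMeasurable (fun ρ => Qker d α b (z/ρ)) (volume.restrict (Ioi z)) :=
      aemeasurable_restrict_of_monotoneOn measurableSet_Ioi (Qker_monoOn d hd hα hb0 hz)
    have hUm : AEMeasurable U (volume.restrict (Ioi z)) :=
      aemeasurable_restrict_of_antitoneOn measurableSet_Ioi
        (hUmono.mono (Ioi_subset_Ioi (le_of_lt hz)))
    exact (aemeasurable_const.mul ((aemeasurable_id.mul hQm).mul hUm)).aestronglyMeasurable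
  case bd =>
    filter_upwards [self_mem_nhdsWithin] with z hz
    filter_upwards [ae_restrict_mem measurableSet_Ioi] with ρ hρ
    have hρ0 : (0:ℝ) < ρ := hρ
    by_cases hzρ : ρ ∈ Ioi z
    · rw [Set.indicator_of_mem hzρ]
      have hzρ' : z < ρ := hzρ
      have hη : z/ρ ∈ Ioo (0:ℝ) 1 := ⟨div_pos hz hρ0, (div_lt_one hρ0).2 hzρ'⟩
      have hg0 : 0 ≤ (z/ρ) ^ ((d:ℝ)-2) * Qker d α b (z/ρ) :=
        mul_nonneg (Real.rpow_nonneg hη.1.le _) (Qker_nonneg d hα hb0 hη.1)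
      have hρD : 0 ≤ ρ ^ ((d:ℝ)-1) := Real.rpow_nonneg hρ0.le _
      have hU := hU0 ρ hρ0
      rw [key z ρ hz hzρ', Real.norm_eq_abs,
        abs_of_nonneg (mul_nonneg (mul_nonneg hρD hg0) hU)]
      have hCη := hCbd _ hη
      calc ρ ^ ((d:ℝ)-1) * ((z/ρ) ^ ((d:ℝ)-2) * Qker d α b (z/ρ)) * U ρ
          ≤ ρ ^ ((d:ℝ)-1) * C * U ρ := by
            apply mul_le_mul_of_nonneg_right _ hU
            exact mul_le_mul_of_nonneg_left hCη hρD
        _ = C * (ρ ^ ((d:ℝ)-1) * U ρ) := by ring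
    · rw [Set.indicator_of_notMem hzρ]
      simp only [norm_zero]
      exact mul_nonneg hC.le (mul_nonneg (Real.rpow_nonneg hρ0.le _) (hU0 ρ hρ0))
  case bint => exact hUint.const_mul C
  case lim =>
    filter_upwards [ae_restrict_mem measurableSet_Ioi] with ρ hρ
    have hρ0 : (0:ℝ) < ρ := hρ
    have hev : ∀ᶠ z in nhdsWithin (0:ℝ) (Ioi 0), z ∈ Ioo 0 ρ :=
      Ioo_mem_nhdsGT hρ0
    have hdiv : Tendsto (fun z : ℝ => z/ρ) (nhdsWithin 0 (Ioi 0)) (nhdsWithin 0 (Ioi 0)) := by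
      rw [tendsto_nhdsWithin_iff]
      constructor
      · have h0 : Tendsto (fun z : ℝ => z/ρ) (nhds 0) (nhds (0/ρ)) :=
          (continuous_id.div_const ρ).tendsto 0
        rw [zero_div] at h0
        exact h0.mono_left nhdsWithin_le_nhds
      · filter_upwards [self_mem_nhdsWithin] with z hz
        exact div_pos hz hρ0
    have hg := hgt.comp hdiv
    have ht : Tendsto (fun z : ℝ => ρ ^ ((d:ℝ)-1) * ((z/ρ) ^ ((d:ℝ)-2) * Qker d α b (z/ρ)) * U ρ)
        (nhdsWithin 0 (Ioi 0)) (nhds (ρ ^ ((d:ℝ)-1) * L * U ρ)) :=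
      (tendsto_const_nhds.mul hg).mul tendsto_const_nhds
    have heqv : (fun z : ℝ => ρ ^ ((d:ℝ)-1) * ((z/ρ) ^ ((d:ℝ)-2) * Qker d α b (z/ρ)) * U ρ)
        =ᶠ[nhdsWithin (0:ℝ) (Ioi 0)]
        (fun z => Set.indicator (Ioi z)
          (fun ρ' => z ^ ((d:ℝ)-2) * (ρ' * Qker d α b (z/ρ') * U ρ')) ρ) := by
      filter_upwards [hev] with z hz
      rw [Set.indicator_of_mem (show ρ ∈ Ioi z from hz.2)]
      exact (key z ρ hz.1 hz.2).symm
    have hre : L * (ρ ^ ((d:ℝ)-1) * U ρ) = ρ ^ ((d:ℝ)-1) * L * U ρ := by ring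
    rw [hre]
    exact ht.congr' heqv
  have hfinal : (fun z : ℝ => ∫ ρ, Set.indicator (Ioi z)
        (fun ρ => z ^ ((d:ℝ)-2) * (ρ * Qker d α b (z/ρ) * U ρ)) ρ
          ∂(volume.restrict (Ioi (0:ℝ))))
      =ᶠ[nhdsWithin (0:ℝ) (Ioi 0)]
      (fun z => z ^ ((d:ℝ)-2) * ∫ ρ in Set.Ioi z, ρ * Qker d α b (z/ρ) * U ρ) := by
    filter_upwards [self_mem_nhdsWithin] with z hz
    rw [setIntegral_indicator measurableSet_Ioi,
      show Ioi (0:ℝ) ∩ Ioi z = Ioi z from Set.inter_eq_right.2 (Ioi_subset_Ioi (le_of_lt hz))]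
    exact integral_const_mul _ _
  have hI : (∫ ρ in Set.Ioi (0:ℝ), L * (ρ ^ ((d:ℝ)-1) * U ρ))
      = L * ∫ ρ in Set.Ioi (0:ℝ), ρ ^ ((d:ℝ)-1) * U ρ := integral_const_mul _ _
  have hres := hDCT.congr' hfinal
  rw [hI] at hres
  exact hres
end

section
/- Assume m > 1. Let U₁, U₂ : (0,∞) → [0,∞) be continuous profile solutions, each with bounded support. If U₁(z₀) < U₂(z₀) for some z₀ > 0, then for every z > 0 either U₁(z) < U₂(z) or U₁(z) = U₂(z) = 0. -/
/-!
Profile solutions are nonincreasing, positive to the left of the right end of their support and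
zero to the right of it. Since the kernel is positive, if `U ≤ V` on `(z, ∞)` and the support of
`V` reaches beyond that of `U`, then `U z ^ m < V z ^ m`; a continuous downward induction from the
support edge then gives `U ≤ V` everywhere, strictly inside the support of `V`. So the solution
with the shorter support lies below. When the support of `U₂` is not longer, the same argument
applied to `U₂` and the rescalings `t ^ (-2 / (m - 1)) * U₁ (t * z)`, `t < 1` (again solutions,
with support stretched by `1 / t`), yields `U₂ ≤ U₁` in the limit `t → 1`, contradicting
`U₁ z₀ < U₂ z₀`.
-/

open MeasureTheory Set Filter

/-- The kernel `K(z,ρ) = ρ·Q(z/ρ)`. -/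
noncomputable def Kker (d : ℕ) (α b : ℝ) (z ρ : ℝ) : ℝ := ρ * Qker d α b (z / ρ)

/-- A profile solution: `U : (0,∞) → [0,∞)` with, for every `z > 0`,
`ρ ↦ K(z,ρ)·U(ρ)` integrable on `(z,∞)` and `U(z)^m = ∫_z^∞ K(z,ρ)·U(ρ) dρ`. -/
def IsProfileSolution (d : ℕ) (α b m : ℝ) (U : ℝ → ℝ) : Prop :=
  (∀ z, 0 < z → 0 ≤ U z) ∧
  ∀ z, 0 < z →
    MeasureTheory.IntegrableOn (fun ρ => Kker d α b z ρ * U ρ) (Set.Ioi z) ∧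
    U z ^ m = ∫ ρ in Set.Ioi z, Kker d α b z ρ * U ρ

open Topology Pointwise

lemma setIntegral_pos_of_pos_on_Ioo {f : ℝ → ℝ} {s : Set ℝ} {a c : ℝ}
    (hs : MeasurableSet s) (hf : IntegrableOn f s) (hnonneg : ∀ x ∈ s, 0 ≤ f x) (hac : a < c)
    (hsub : Ioo a c ⊆ s) (hpos : ∀ x ∈ Ioo a c, 0 < f x) : 0 < ∫ x in s, f x := by
  rw [setIntegral_pos_iff_support_of_nonneg_ae ((ae_restrict_iff' hs).mpr (ae_of_all _ hnonneg)) hf]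
  exact ((Measure.measure_Ioo_pos _).mpr hac).trans_le
    (measure_mono fun x hx => ⟨(hpos x hx).ne', hsub hx⟩)

lemma integrableOn_one_sub_rpow_neg {α : ℝ} (hα : α < 1) :
    IntegrableOn (fun σ : ℝ => (1 - σ) ^ (-α)) (Ioo 0 1) := by
  have h : IntervalIntegrable (fun x : ℝ => x ^ (-α)) volume 0 1 :=
    intervalIntegral.intervalIntegrable_rpow' (by linarith)
  have h' : IntervalIntegrable (fun x : ℝ => (1 - x) ^ (-α)) volume 0 1 := by
    simpa using (h.comp_sub_left 1).symm
  exact (intervalIntegrable_iff_integrableOn_Ioo_of_le zero_le_one).mp h'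

/-- Continuous downward induction on `(0, ∞)`. Consider the supremum `s` of `{V < U}`: then
`U ≤ V` on `(s, ∞)`, so `U s < V s`, and by continuity `U < V` on a neighbourhood of `s`. -/
lemma le_of_continuous_descent {U V : ℝ → ℝ} {Z : ℝ} (hU : ContinuousOn U (Ioi 0))
    (hV : ContinuousOn V (Ioi 0)) (htail : ∀ z, 0 < z → Z < z → U z ≤ V z)
    (hstep : ∀ z, 0 < z → z ≤ Z → (∀ ρ, z < ρ → U ρ ≤ V ρ) → U z < V z) :
    ∀ z, 0 < z → U z ≤ V z := by
  by_contra! hbad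
  set D := {z : ℝ | 0 < z ∧ V z < U z}
  obtain ⟨w, hw⟩ : D.Nonempty := hbad
  have hDZ : ∀ z ∈ D, z ≤ Z := fun z hz => not_lt.mp fun h => (htail z hz.1 h).not_gt hz.2
  have hDbdd : BddAbove D := ⟨Z, hDZ⟩
  have hs : 0 < sSup D := hw.1.trans_le (le_csSup hDbdd hw)
  have habove : ∀ ρ, sSup D < ρ → U ρ ≤ V ρ := fun ρ hρ =>
    not_lt.mp fun h => (le_csSup hDbdd ⟨hs.trans hρ, h⟩).not_gt hρ
  have hlt : U (sSup D) < V (sSup D) := hstep _ hs (csSup_le ⟨w, hw⟩ hDZ) habove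
  obtain ⟨ε, hε, hnear⟩ := Metric.eventually_nhds_iff.mp <|
    (hU.continuousAt (Ioi_mem_nhds hs)).eventually_lt (hV.continuousAt (Ioi_mem_nhds hs)) hlt
  obtain ⟨y, hyD, hy⟩ := exists_lt_of_lt_csSup ⟨w, hw⟩ (sub_lt_self (sSup D) hε)
  have hyε : dist y (sSup D) < ε := by
    rw [Real.dist_eq, abs_lt]
    constructor <;> linarith [le_csSup hDbdd hyD]
  exact (hnear hyε).not_gt hyD.2

section Kernel

variable {d : ℕ} {α b : ℝ}

lemma one_sub_rpow_one_div_pos (hb : 0 < b) {σ : ℝ} (hσ : σ ∈ Ioo 0 1) :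
    0 < 1 - σ ^ (1 / b) := by
  linarith [Real.rpow_lt_one hσ.1.le hσ.2 (one_div_pos.mpr hb)]

lemma one_sub_rpow_one_div_rpow_neg_le (hα : 0 ≤ α) (hb : b ∈ Ioc 0 1) {σ : ℝ}
    (hσ : σ ∈ Ioo 0 1) : (1 - σ ^ (1 / b)) ^ (-α) ≤ (1 - σ) ^ (-α) := by
  have hle : σ ^ (1 / b) ≤ σ := by
    simpa using Real.rpow_le_rpow_of_exponent_ge hσ.1 hσ.2.le (one_le_one_div hb.1 hb.2)
  exact Real.rpow_le_rpow_of_nonpos (by linarith [hσ.2]) (by linarith) (by linarith)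

lemma Qker_integrand_pos (hb : 0 < b) {σ : ℝ} (hσ : σ ∈ Ioo 0 1) :
    0 < (1 - σ ^ (1 / b)) ^ (-α) * σ ^ (1 - (d:ℝ)) :=
  mul_pos (Real.rpow_pos_of_pos (one_sub_rpow_one_div_pos hb hσ) _) (Real.rpow_pos_of_pos hσ.1 _)

lemma integrableOn_Qker_integrand (hα : α ∈ Ico 0 1) (hb : b ∈ Ioc 0 1) {η : ℝ}
    (hη : 0 < η) :
    IntegrableOn (fun σ => (1 - σ ^ (1 / b)) ^ (-α) * σ ^ (1 - (d:ℝ))) (Ioo η 1) := by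
  have hsingular : IntegrableOn (fun σ : ℝ => (1 - σ ^ (1 / b)) ^ (-α)) (Ioo 0 1) := by
    refine (integrableOn_one_sub_rpow_neg hα.2).mono'
      (by fun_prop : Measurable fun σ : ℝ => (1 - σ ^ (1 / b)) ^ (-α)).aestronglyMeasurable
      ((ae_restrict_iff' measurableSet_Ioo).mpr (ae_of_all _ fun σ hσ => ?_))
    rw [Real.norm_of_nonneg (Real.rpow_pos_of_pos (one_sub_rpow_one_div_pos hb.1 hσ) _).le]
    exact one_sub_rpow_one_div_rpow_neg_le hα.1 hb hσ
  refine (hsingular.mono_set (Ioo_subset_Ioo_left hη.le)).mul_continuousOn_of_subset ?_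
    measurableSet_Ioo isCompact_Icc Ioo_subset_Icc_self
  exact continuousOn_id.rpow_const fun σ hσ => Or.inl (hη.trans_le hσ.1).ne'

lemma Qker_pos (hα : α ∈ Ico 0 1) (hb : b ∈ Ioc 0 1) {η : ℝ} (hη : η ∈ Ioo 0 1) :
    0 < Qker d α b η := by
  have hΓ : 0 < Real.Gamma (1 - α) := Real.Gamma_pos_of_pos (by linarith [hα.2])
  have hpos {σ : ℝ} (hσ : σ ∈ Ioo η 1) :
      0 < (1 - σ ^ (1 / b)) ^ (-α) * σ ^ (1 - (d:ℝ)) :=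
    Qker_integrand_pos hb.1 ⟨hη.1.trans hσ.1, hσ.2⟩
  refine mul_pos (by positivity) (setIntegral_pos_of_pos_on_Ioo measurableSet_Ioo
    (integrableOn_Qker_integrand hα hb hη.1) (fun σ hσ => (hpos hσ).le) hη.2 subset_rfl
    fun σ hσ => hpos hσ)

lemma Qker_antitoneOn (hα : α ∈ Ico 0 1) (hb : b ∈ Ioc 0 1) :
    AntitoneOn (Qker d α b) (Ioi 0) := by
  intro η₁ hη₁ η₂ _ hη
  have hΓ : 0 < Real.Gamma (1 - α) := Real.Gamma_pos_of_pos (by linarith [hα.2])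
  refine mul_le_mul_of_nonneg_left (setIntegral_mono_set (integrableOn_Qker_integrand hα hb hη₁)
    ((ae_restrict_iff' measurableSet_Ioo).mpr (ae_of_all _ fun σ hσ => ?_))
    (Ioo_subset_Ioo_left hη).eventuallyLE) (by positivity)
  exact (Qker_integrand_pos hb.1 ⟨(mem_Ioi.mp hη₁).trans hσ.1, hσ.2⟩).le

lemma Kker_pos (hα : α ∈ Ico 0 1) (hb : b ∈ Ioc 0 1) {z ρ : ℝ} (hz : 0 < z)
    (hzρ : z < ρ) : 0 < Kker d α b z ρ :=
  have hρ : 0 < ρ := hz.trans hzρ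
  mul_pos hρ (Qker_pos hα hb ⟨div_pos hz hρ, (div_lt_one hρ).mpr hzρ⟩)

lemma Kker_anti_left (hα : α ∈ Ico 0 1) (hb : b ∈ Ioc 0 1) {z z' ρ : ℝ} (hz : 0 < z)
    (hzz' : z ≤ z') (hρ : 0 < ρ) : Kker d α b z' ρ ≤ Kker d α b z ρ :=
  mul_le_mul_of_nonneg_left (Qker_antitoneOn hα hb (div_pos hz hρ)
    (div_pos (hz.trans_le hzz') hρ) (div_le_div_of_nonneg_right hzz' hρ.le)) hρ.le

lemma Kker_mul_mul (z ρ : ℝ) {t : ℝ} (ht : t ≠ 0) :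
    Kker d α b (t * z) (t * ρ) = t * Kker d α b z ρ := by
  rw [Kker, Kker, mul_div_mul_left _ _ ht, mul_assoc]

end Kernel

section ProfileSolution

variable {d : ℕ} {α b m : ℝ} {U V : ℝ → ℝ}

lemma IsProfileSolution.antitoneOn (hα : α ∈ Ico 0 1) (hb : b ∈ Ioc 0 1) (hm : 0 < m)
    (hU : IsProfileSolution d α b m U) : AntitoneOn U (Ioi 0) := by
  intro z hz z' hz' hzz'
  obtain ⟨hint, heq⟩ := hU.2 z hz
  obtain ⟨hint', heq'⟩ := hU.2 z' hz'
  have hnonneg : ∀ ρ ∈ Ioi z, 0 ≤ Kker d α b z ρ * U ρ := fun ρ hρ =>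
    mul_nonneg (Kker_pos hα hb hz hρ).le (hU.1 ρ (hz.trans hρ))
  rw [← Real.rpow_le_rpow_iff (hU.1 z' hz') (hU.1 z hz) hm, heq, heq']
  calc ∫ ρ in Ioi z', Kker d α b z' ρ * U ρ ≤ ∫ ρ in Ioi z', Kker d α b z ρ * U ρ :=
        setIntegral_mono_on hint' (hint.mono_set (Ioi_subset_Ioi hzz')) measurableSet_Ioi
          fun ρ hρ => mul_le_mul_of_nonneg_right
            (Kker_anti_left hα hb hz hzz' ((mem_Ioi.mp hz').trans hρ))
            (hU.1 ρ ((mem_Ioi.mp hz').trans hρ))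
    _ ≤ ∫ ρ in Ioi z, Kker d α b z ρ * U ρ :=
        setIntegral_mono_set hint ((ae_restrict_iff' measurableSet_Ioi).mpr (ae_of_all _ hnonneg))
          (Ioi_subset_Ioi hzz').eventuallyLE

lemma IsProfileSolution.rescale (hm : m ≠ 1) (hU : IsProfileSolution d α b m U) {t : ℝ}
    (ht : 0 < t) : IsProfileSolution d α b m (fun z => t ^ (-2 / (m - 1)) * U (t * z)) := by
  set c : ℝ := -2 / (m - 1)
  refine ⟨fun z hz => mul_nonneg (by positivity) (hU.1 _ (by positivity)), fun z hz => ?_⟩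
  obtain ⟨hint, heq⟩ := hU.2 (t * z) (by positivity)
  have hK : (fun ρ => Kker d α b z ρ * (t ^ c * U (t * ρ)))
      = fun ρ => t⁻¹ * t ^ c * (Kker d α b (t * z) (t * ρ) * U (t * ρ)) := by
    funext ρ
    rw [Kker_mul_mul z ρ ht.ne']
    field_simp
  have hint' : IntegrableOn (fun ρ => Kker d α b (t * z) (t * ρ) * U (t * ρ)) (Ioi z) :=
    (integrableOn_Ioi_comp_mul_left_iff (fun s => Kker d α b (t * z) s * U s) z ht).mpr hint
  refine ⟨hK ▸ hint'.const_mul _, ?_⟩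
  -- `c * m = c - 2`: one `t⁻¹` comes from the homogeneity of `Kker`, one from the substitution
  have hcm : t ^ (c * m) = t⁻¹ * t ^ c * t⁻¹ := by
    have hc : c * (m - 1) = -2 := div_mul_cancel₀ _ (sub_ne_zero.mpr hm)
    have : c * m = c + -1 + -1 := by linear_combination hc
    rw [this, Real.rpow_add ht, Real.rpow_add ht, Real.rpow_neg_one]
    ring
  beta_reduce
  rw [hK, integral_const_mul,
    integral_comp_mul_left_Ioi (fun s => Kker d α b (t * z) s * U s) z ht, ← heq,
    smul_eq_mul, Real.mul_rpow (by positivity) (hU.1 _ (by positivity)),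
    ← Real.rpow_mul ht.le, hcm]
  ring

/-- The right end of the support of `U` in `(0, ∞)` (`0` if that support is empty or
unbounded). -/
noncomputable def supportEdge (U : ℝ → ℝ) : ℝ := sSup {z : ℝ | 0 < z ∧ U z ≠ 0}

lemma eq_zero_of_supportEdge_lt (hbd : BddAbove {z : ℝ | 0 < z ∧ U z ≠ 0}) {z : ℝ}
    (hz : 0 < z) (h : supportEdge U < z) : U z = 0 := by
  by_contra hne
  exact (le_csSup hbd ⟨hz, hne⟩).not_gt h

lemma supportEdge_pos (hbd : BddAbove {z : ℝ | 0 < z ∧ U z ≠ 0}) {z : ℝ} (hz : 0 < z)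
    (hne : U z ≠ 0) : 0 < supportEdge U :=
  hz.trans_le (le_csSup hbd ⟨hz, hne⟩)

lemma supportEdge_rescale (U : ℝ → ℝ) {a t : ℝ} (ha : a ≠ 0) (ht : 0 < t) :
    supportEdge (fun z => a * U (t * z)) = t⁻¹ * supportEdge U := by
  have hset :
      {z : ℝ | 0 < z ∧ a * U (t * z) ≠ 0} = t⁻¹ • {z : ℝ | 0 < z ∧ U z ≠ 0} := by
    ext z
    rw [mem_smul_set_iff_inv_smul_mem₀ (inv_ne_zero ht.ne'), inv_inv, smul_eq_mul]
    simp [ha, mul_pos_iff_of_pos_left ht]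
  rw [supportEdge, hset, Real.sSup_smul_of_nonneg (inv_nonneg.mpr ht.le), smul_eq_mul, supportEdge]

lemma IsProfileSolution.pos_of_lt_supportEdge (hα : α ∈ Ico 0 1) (hb : b ∈ Ioc 0 1)
    (hm : 0 < m) (hU : IsProfileSolution d α b m U) {z : ℝ} (hz : 0 < z)
    (h : z < supportEdge U) : 0 < U z := by
  have hne : {z : ℝ | 0 < z ∧ U z ≠ 0}.Nonempty := by
    by_contra hem
    rw [not_nonempty_iff_eq_empty] at hem
    rw [supportEdge, hem, Real.sSup_empty] at h
    exact hz.not_gt h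
  obtain ⟨y, ⟨hy, hUy⟩, hzy⟩ := exists_lt_of_lt_csSup hne h
  exact (hU.1 y hy).lt_of_ne' hUy |>.trans_le (hU.antitoneOn hα hb hm hz hy hzy.le)

/-- `V z ^ m - U z ^ m` is the integral of `Kker z · (V - U) ≥ 0`, which is positive on the
nonempty interval `(max z (supportEdge U), supportEdge V)`. -/
lemma IsProfileSolution.lt_of_le_on_Ioi (hα : α ∈ Ico 0 1) (hb : b ∈ Ioc 0 1) (hm : 0 < m)
    (hU : IsProfileSolution d α b m U) (hV : IsProfileSolution d α b m V)
    (hbdU : BddAbove {z : ℝ | 0 < z ∧ U z ≠ 0}) {z : ℝ} (hz : 0 < z)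
    (hzU : z < supportEdge V) (hUV : supportEdge U < supportEdge V)
    (hle : ∀ ρ, z < ρ → U ρ ≤ V ρ) : U z < V z := by
  obtain ⟨hintU, heqU⟩ := hU.2 z hz
  obtain ⟨hintV, heqV⟩ := hV.2 z hz
  have hgap : 0 < ∫ ρ in Ioi z, (Kker d α b z ρ * V ρ - Kker d α b z ρ * U ρ) := by
    refine setIntegral_pos_of_pos_on_Ioo measurableSet_Ioi (hintV.sub hintU)
      (fun ρ hρ => sub_nonneg.mpr (mul_le_mul_of_nonneg_left (hle ρ hρ)
        (Kker_pos hα hb hz hρ).le)) (max_lt hzU hUV)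
      (Ioo_subset_Ioi_self.trans (Ioi_subset_Ioi (le_max_left _ _))) fun ρ hρ => ?_
    have hzρ : z < ρ := (le_max_left _ _).trans_lt hρ.1
    rw [eq_zero_of_supportEdge_lt hbdU (hz.trans hzρ) ((le_max_right _ _).trans_lt hρ.1),
      mul_zero, sub_zero]
    exact mul_pos (Kker_pos hα hb hz hzρ)
      (hV.pos_of_lt_supportEdge hα hb hm (hz.trans hzρ) hρ.2)
  rw [integral_sub hintV hintU, ← heqU, ← heqV, sub_pos] at hgap
  exact (Real.rpow_lt_rpow_iff (hU.1 z hz) (hV.1 z hz) hm).mp hgap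

end ProfileSolution

section Comparison

variable {d : ℕ} {α b m : ℝ} {U V : ℝ → ℝ}

lemma IsProfileSolution.le_of_supportEdge_lt (hα : α ∈ Ico 0 1) (hb : b ∈ Ioc 0 1)
    (hm : 0 < m) (hU : IsProfileSolution d α b m U) (hV : IsProfileSolution d α b m V)
    (hcU : ContinuousOn U (Ioi 0)) (hcV : ContinuousOn V (Ioi 0))
    (hbdU : BddAbove {z : ℝ | 0 < z ∧ U z ≠ 0}) (hUV : supportEdge U < supportEdge V) :
    ∀ z, 0 < z → U z ≤ V z :=
  le_of_continuous_descent hcU hcV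
    (fun z hz hzU => (eq_zero_of_supportEdge_lt hbdU hz hzU).symm ▸ hV.1 z hz)
    fun _ hz hzU hle => hU.lt_of_le_on_Ioi hα hb hm hV hbdU hz (hzU.trans_lt hUV) hUV hle

lemma IsProfileSolution.lt_or_eq_zero_of_supportEdge_lt (hα : α ∈ Ico 0 1) (hb : b ∈ Ioc 0 1)
    (hm : 0 < m) (hU : IsProfileSolution d α b m U) (hV : IsProfileSolution d α b m V)
    (hcU : ContinuousOn U (Ioi 0)) (hcV : ContinuousOn V (Ioi 0))
    (hbdU : BddAbove {z : ℝ | 0 < z ∧ U z ≠ 0}) (hUV : supportEdge U < supportEdge V) :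
    ∀ z, 0 < z → U z < V z ∨ (U z = 0 ∧ V z = 0) := by
  intro z hz
  rcases le_or_gt z (supportEdge U) with hzU | hzU
  · exact Or.inl <| hU.lt_of_le_on_Ioi hα hb hm hV hbdU hz (hzU.trans_lt hUV) hUV fun ρ hρ =>
      hU.le_of_supportEdge_lt hα hb hm hV hcU hcV hbdU hUV ρ (hz.trans hρ)
  · rw [eq_zero_of_supportEdge_lt hbdU hz hzU]
    exact (hV.1 z hz).lt_or_eq.imp id fun h => ⟨rfl, h.symm⟩

lemma IsProfileSolution.le_of_supportEdge_le (hα : α ∈ Ico 0 1) (hb : b ∈ Ioc 0 1)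
    (hm₀ : 0 < m) (hm₁ : m ≠ 1) (hU : IsProfileSolution d α b m U)
    (hV : IsProfileSolution d α b m V) (hcU : ContinuousOn U (Ioi 0))
    (hcV : ContinuousOn V (Ioi 0)) (hbdU : BddAbove {z : ℝ | 0 < z ∧ U z ≠ 0})
    (hbdV : BddAbove {z : ℝ | 0 < z ∧ V z ≠ 0})
    {w : ℝ} (hw : 0 < w) (hVw : V w ≠ 0) (hUV : supportEdge U ≤ supportEdge V) :
    ∀ z, 0 < z → U z ≤ V z := by
  set c : ℝ := -2 / (m - 1)
  have hscaled : ∀ t ∈ Ioo (0 : ℝ) 1, ∀ z, 0 < z → U z ≤ t ^ c * V (t * z) := by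
    intro t ht
    refine hU.le_of_supportEdge_lt hα hb hm₀ (hV.rescale hm₁ ht.1) hcU
      (continuousOn_const.mul (hcV.comp (continuous_const_mul t).continuousOn
        fun z hz => mul_pos ht.1 hz)) hbdU ?_
    rw [supportEdge_rescale V (Real.rpow_pos_of_pos ht.1 c).ne' ht.1]
    exact hUV.trans_lt <| lt_inv_mul_iff₀ ht.1 |>.mpr <|
      mul_lt_of_lt_one_left (supportEdge_pos hbdV hw hVw) ht.2
  intro z hz
  have hcont : ContinuousAt (fun t : ℝ => t ^ c * V (t * z)) 1 :=
    (Real.continuousAt_rpow_const 1 c (Or.inl one_ne_zero)).mul <|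
      (hcV.continuousAt (Ioi_mem_nhds hz)).comp_of_eq (continuous_mul_const z).continuousAt
        (one_mul z)
  have hlim : Tendsto (fun t : ℝ => t ^ c * V (t * z)) (𝓝[<] 1) (𝓝 (V z)) := by
    simpa using hcont.tendsto.mono_left nhdsWithin_le_nhds
  exact ge_of_tendsto hlim <| eventually_of_mem (Ioo_mem_nhdsLT zero_lt_one) fun t ht =>
    hscaled t ht z hz

end Comparison

theorem strict_comparison_principle_general (d : ℕ) (α m b : ℝ)
    (hα : α ∈ Set.Ioo (0:ℝ) 1)
    (hm : 1 < m)
    (hb : b = α / (2 + (d:ℝ) * (m - 1)))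
    (U₁ U₂ : ℝ → ℝ)
    (hsol₁ : IsProfileSolution d α b m U₁) (hsol₂ : IsProfileSolution d α b m U₂)
    (hc₁ : ContinuousOn U₁ (Set.Ioi 0)) (hc₂ : ContinuousOn U₂ (Set.Ioi 0))
    (hbd₁ : Bornology.IsBounded {z : ℝ | 0 < z ∧ U₁ z ≠ 0})
    (hbd₂ : Bornology.IsBounded {z : ℝ | 0 < z ∧ U₂ z ≠ 0})
    (z₀ : ℝ) (hz₀ : 0 < z₀) (hlt : U₁ z₀ < U₂ z₀) :
    ∀ z, 0 < z → U₁ z < U₂ z ∨ (U₁ z = 0 ∧ U₂ z = 0) := by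
  have hα' : α ∈ Ico 0 1 := ⟨hα.1.le, hα.2⟩
  have hden : 2 ≤ 2 + (d:ℝ) * (m - 1) := by
    linarith [mul_nonneg d.cast_nonneg (sub_nonneg.mpr hm.le)]
  have hb' : b ∈ Ioc 0 1 := by
    rw [hb]
    exact ⟨div_pos hα.1 (by linarith), (div_le_one (by linarith)).mpr (by linarith [hα.2])⟩
  intro z hz
  by_cases hU₁ : ∃ w, 0 < w ∧ U₁ w ≠ 0
  · obtain ⟨w, hw, hU₁w⟩ := hU₁
    rcases lt_or_ge (supportEdge U₁) (supportEdge U₂) with hedge | hedge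
    · exact hsol₁.lt_or_eq_zero_of_supportEdge_lt hα' hb' (by linarith) hsol₂ hc₁ hc₂
        hbd₁.bddAbove hedge z hz
    · exact absurd (hsol₂.le_of_supportEdge_le hα' hb' (by linarith) hm.ne' hsol₁ hc₂ hc₁
        hbd₂.bddAbove hbd₁.bddAbove hw hU₁w hedge z₀ hz₀) hlt.not_ge
  · have hU₁z : U₁ z = 0 := by
      by_contra h
      exact hU₁ ⟨z, hz, h⟩
    rw [hU₁z]
    exact (hsol₂.1 z hz).lt_or_eq.imp id fun h => ⟨rfl, h.symm⟩

/-- strict comparison principle in the slow-diffusion range `m > 1` for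
continuous, compactly supported profile solutions. -/
theorem strict_comparison_principle (d : ℕ) (hd : 1 ≤ d) (α m b : ℝ)
    (hα : α ∈ Set.Ioo (0:ℝ) 1)
    (hm : 1 < m)
    (hb : b = α / (2 + (d:ℝ) * (m - 1)))
    (U₁ U₂ : ℝ → ℝ)
    (hsol₁ : IsProfileSolution d α b m U₁) (hsol₂ : IsProfileSolution d α b m U₂)
    (hc₁ : ContinuousOn U₁ (Set.Ioi 0)) (hc₂ : ContinuousOn U₂ (Set.Ioi 0))
    (hbd₁ : Bornology.IsBounded {z : ℝ | 0 < z ∧ U₁ z ≠ 0})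
    (hbd₂ : Bornology.IsBounded {z : ℝ | 0 < z ∧ U₂ z ≠ 0})
    (z₀ : ℝ) (hz₀ : 0 < z₀) (hlt : U₁ z₀ < U₂ z₀) :
    ∀ z, 0 < z → U₁ z < U₂ z ∨ (U₁ z = 0 ∧ U₂ z = 0) :=
  strict_comparison_principle_general d α m b hα hm hb U₁ U₂ hsol₁ hsol₂ hc₁ hc₂ hbd₁ hbd₂ z₀ hz₀
    hlt
end
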